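/- The Thue-Morse sequence is not eventually periodic: there is no p ≥ 1 and N such that u(n+p) = u(n) for all n ≥ N. -/

import Mathlib

def tm (n : ℕ) : Fin 2 := Fin.ofNat 2 ((Nat.digits 2 n).count 1)

lemma tm_two_mul (n : ℕ) : tm (2 * n) = tm n := by
  rcases Nat.eq_zero_or_pos n with h | h
  · simp [h]
  · unfold tm
    rw [Nat.digits_def' (by norm_num : 1 < 2) (by omega : 0 < 2 * n)]
    simp [Nat.mul_div_cancel_left, Nat.mul_mod_right, List.count_cons]

lemma tm_two_mul_add_one (n : ℕ) : tm (2 * n + 1) = tm n + 1 := by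
  unfold tm
  rw [Nat.digits_def' (by norm_num : 1 < 2) (by omega : 0 < 2 * n + 1)]
  have h1 : (2 * n + 1) % 2 = 1 := by omega
  have h2 : (2 * n + 1) / 2 = n := by omega
  rw [h1, h2]
  simp [List.count_cons]
  apply Fin.ext
  simp only [Fin.val_add, Fin.val_ofNat, Fin.val_natCast, Fin.val_one]
  omega

lemma fin2_ne_add_one (x : Fin 2) : x ≠ x + 1 := by revert x; decide

lemma fin2_add_one_add_one (x : Fin 2) : x + 1 + 1 = x := by revert x; decide

lemma key : ∀ p, 1 ≤ p → ∀ N, ¬ (∀ n ≥ N, tm (n + p) = tm n) := by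
  intro p
  induction p using Nat.strong_induction_on with
  | _ p ih =>
    intro hp N h
    rcases Nat.even_or_odd p with ⟨q, hq⟩ | ⟨q, hq⟩
    · -- p = 2q
      have hq1 : 1 ≤ q := by omega
      apply ih q (by omega) hq1 N
      intro m hm
      have h2m : 2 * m ≥ N := by omega
      have := h (2 * m) h2m
      have e : 2 * m + p = 2 * (m + q) := by omega
      rw [e, tm_two_mul, tm_two_mul] at this
      exact this
    · -- p = 2q+1
      have ha : ∀ m ≥ N, tm (m + q) + 1 = tm m := by
        intro m hm
        have := h (2 * m) (by omega)
        have e : 2 * m + p = 2 * (m + q) + 1 := by omega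
        rw [e, tm_two_mul_add_one, tm_two_mul] at this
        exact this
      have hb : ∀ m ≥ N, tm (m + q + 1) = tm m + 1 := by
        intro m hm
        have := h (2 * m + 1) (by omega)
        have e : 2 * m + 1 + p = 2 * (m + q + 1) := by omega
        rw [e, tm_two_mul, tm_two_mul_add_one] at this
        exact this
      -- tm constant on consecutive values ≥ N + q
      have hc : ∀ k ≥ N + q, tm (k + 1) = tm k := by
        intro k hk
        set m := k - q with hm
        have hmk : k = m + q := by omega
        have hmN : m ≥ N := by omega
        have h1 := ha m hmN
        have h2 := hb m hmN
        rw [hmk, h2, ← h1, fin2_add_one_add_one]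
      have hk1 := hc (2 * (N + q)) (by omega)
      rw [tm_two_mul_add_one, tm_two_mul] at hk1
      exact fin2_ne_add_one _ hk1.symm

theorem thue_morse_not_eventually_periodic :
    ¬ ∃ (p N : ℕ), 1 ≤ p ∧ ∀ n ≥ N, tm (n + p) = tm n := by
  rintro ⟨p, N, hp, h⟩
  exact key p hp N h
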